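/- In an $m \times m$ grid of points with minimum spacing $d$ ($n = m^2$ nodes), any non-cooperative broadcast requires total power at least $n d^2 / 9$. Formally: let $A$ be a finite set of grid nodes with powers $\rho(u) \geq d^2$, and suppose every one of the $n$ grid nodes lies within distance $\sqrt{\rho(u)}$ of some $u \in A$. Then $\sum_{u \in A} \rho(u) \geq \frac{n d^2}{9}$. -/

import Mathlib

/-- Grid node `(i, j)` sits at the point `(i*d, j*d)` of the Euclidean plane. -/
noncomputable def gridPos (d : ℝ) (ij : ℕ × ℕ) : EuclideanSpace ℝ (Fin 2) :=
  WithLp.toLp 2 ![(ij.1 : ℝ) * d, (ij.2 : ℝ) * d]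

lemma coord_abs_le_dist (x y : EuclideanSpace ℝ (Fin 2)) (i : Fin 2) :
    |x i - y i| ≤ dist x y := by
  rw [EuclideanSpace.dist_eq, ← Real.sqrt_sq_eq_abs]
  apply Real.sqrt_le_sqrt
  have h : (x i - y i) ^ 2 = dist (x i) (y i) ^ 2 := by rw [Real.dist_eq, sq_abs]
  rw [h]
  exact Finset.single_le_sum (f := fun j => dist (x j) (y j) ^ 2)
    (fun j _ => sq_nonneg _) (Finset.mem_univ i)

lemma nat_bounds {a b : ℕ} {t : ℝ} (h : |(a : ℝ) - b| ≤ t) :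
    a ≤ b + ⌊t⌋₊ ∧ b ≤ a + ⌊t⌋₊ := by
  constructor
  · rcases le_or_gt a b with h' | h'
    · exact le_trans h' (Nat.le_add_right _ _)
    · have h2 : ((a - b : ℕ) : ℝ) ≤ t := by
        rw [Nat.cast_sub h'.le]
        calc ((a : ℝ) - b) ≤ |(a : ℝ) - b| := le_abs_self _
        _ ≤ t := h
      have := Nat.le_floor h2
      omega
  · rcases le_or_gt b a with h' | h'
    · exact le_trans h' (Nat.le_add_right _ _)
    · have h2 : ((b - a : ℕ) : ℝ) ≤ t := by
        rw [Nat.cast_sub h'.le]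
        calc ((b : ℝ) - a) ≤ |(b : ℝ) - a| := le_abs_self _
        _ = |(a : ℝ) - b| := abs_sub_comm _ _
        _ ≤ t := h
      have := Nat.le_floor h2
      omega

theorem stmt_15 (m : ℕ) (d : ℝ) (hd : 0 < d)
    (A : Finset (ℕ × ℕ)) (hA : A ⊆ Finset.range m ×ˢ Finset.range m)
    (ρ : ℕ × ℕ → ℝ) (hρ : ∀ u ∈ A, d ^ 2 ≤ ρ u)
    (hcover : ∀ v ∈ Finset.range m ×ˢ Finset.range m,
      ∃ u ∈ A, dist (gridPos d v) (gridPos d u) ≤ Real.sqrt (ρ u)) :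
    (m ^ 2 : ℝ) * d ^ 2 / 9 ≤ ∑ u ∈ A, ρ u := by
  classical
  set G := Finset.range m ×ˢ Finset.range m with hG
  set S : ℕ × ℕ → Finset (ℕ × ℕ) :=
    fun u => G.filter (fun v => dist (gridPos d v) (gridPos d u) ≤ Real.sqrt (ρ u)) with hS
  have hsub : G ⊆ A.biUnion S := by
    intro v hv
    obtain ⟨u, hu, hdu⟩ := hcover v hv
    exact Finset.mem_biUnion.2 ⟨u, hu, Finset.mem_filter.2 ⟨hv, hdu⟩⟩
  have h1 : (m ^ 2 : ℕ) ≤ ∑ u ∈ A, (S u).card := by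
    calc m ^ 2 = G.card := by simp [hG, sq]
    _ ≤ (A.biUnion S).card := Finset.card_le_card hsub
    _ ≤ ∑ u ∈ A, (S u).card := Finset.card_biUnion_le
  have hd2 : (0 : ℝ) < d ^ 2 := by positivity
  have h2 : ∀ u ∈ A, ((S u).card : ℝ) ≤ 9 * ρ u / d ^ 2 := by
    intro u hu
    have hρu : (0 : ℝ) ≤ ρ u := le_trans hd2.le (hρ u hu)
    set k := ⌊Real.sqrt (ρ u) / d⌋₊ with hk
    have hcardle : (S u).card ≤ (2 * k + 1) ^ 2 := by
      have hsub2 : S u ⊆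
          Finset.Icc (u.1 - k) (u.1 + k) ×ˢ Finset.Icc (u.2 - k) (u.2 + k) := by
        intro v hv
        have hd' := (Finset.mem_filter.1 hv).2
        have hx : |(v.1 : ℝ) * d - (u.1 : ℝ) * d| ≤ Real.sqrt (ρ u) :=
          le_trans (by simpa [gridPos] using
            coord_abs_le_dist (gridPos d v) (gridPos d u) 0) hd'
        have hy : |(v.2 : ℝ) * d - (u.2 : ℝ) * d| ≤ Real.sqrt (ρ u) :=
          le_trans (by simpa [gridPos] using
            coord_abs_le_dist (gridPos d v) (gridPos d u) 1) hd'
        have hx' : |(v.1 : ℝ) - u.1| ≤ Real.sqrt (ρ u) / d := by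
          rw [le_div_iff₀ hd]
          calc |(v.1 : ℝ) - u.1| * d = |(v.1 : ℝ) * d - (u.1 : ℝ) * d| := by
                rw [← sub_mul, abs_mul, abs_of_pos hd]
          _ ≤ _ := hx
        have hy' : |(v.2 : ℝ) - u.2| ≤ Real.sqrt (ρ u) / d := by
          rw [le_div_iff₀ hd]
          calc |(v.2 : ℝ) - u.2| * d = |(v.2 : ℝ) * d - (u.2 : ℝ) * d| := by
                rw [← sub_mul, abs_mul, abs_of_pos hd]
          _ ≤ _ := hy
        obtain ⟨hx1, hx2⟩ := nat_bounds hx'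
        obtain ⟨hy1, hy2⟩ := nat_bounds hy'
        rw [Finset.mem_product, Finset.mem_Icc, Finset.mem_Icc]
        omega
      calc (S u).card ≤ _ := Finset.card_le_card hsub2
      _ = (Finset.Icc (u.1 - k) (u.1 + k)).card * (Finset.Icc (u.2 - k) (u.2 + k)).card :=
          Finset.card_product _ _
      _ ≤ (2 * k + 1) ^ 2 := by
          rw [Nat.card_Icc, Nat.card_Icc, sq]
          apply Nat.mul_le_mul <;> omega
    have hsq : Real.sqrt (ρ u) ^ 2 = ρ u := Real.sq_sqrt hρu
    have ht1 : (1 : ℝ) ≤ Real.sqrt (ρ u) / d := by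
      rw [le_div_iff₀ hd, one_mul, ← Real.sqrt_sq hd.le]
      exact Real.sqrt_le_sqrt (hρ u hu)
    have hkle : (k : ℝ) ≤ Real.sqrt (ρ u) / d := Nat.floor_le (le_trans zero_le_one ht1)
    calc ((S u).card : ℝ) ≤ ((2 * k + 1 : ℕ) : ℝ) ^ 2 := by exact_mod_cast hcardle
    _ ≤ 9 * (Real.sqrt (ρ u) / d) ^ 2 := by push_cast; nlinarith
    _ = 9 * ρ u / d ^ 2 := by rw [div_pow, hsq]; ring
  have h3 : (m ^ 2 : ℝ) ≤ 9 * (∑ u ∈ A, ρ u) / d ^ 2 := by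
    calc (m ^ 2 : ℝ) ≤ ((∑ u ∈ A, (S u).card : ℕ) : ℝ) := by exact_mod_cast h1
    _ = ∑ u ∈ A, ((S u).card : ℝ) := by push_cast; ring
    _ ≤ ∑ u ∈ A, (9 * ρ u / d ^ 2) := Finset.sum_le_sum h2
    _ = 9 * (∑ u ∈ A, ρ u) / d ^ 2 := by
        rw [Finset.mul_sum, ← Finset.sum_div]
  rw [le_div_iff₀ hd2] at h3
  rw [div_le_iff₀ (by norm_num : (0 : ℝ) < 9)]
  linarith
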